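/- For α > 1, σ > 0, c ∈ ℝ, and q ∈ [0,1], let P = (1−q)·N(0,σ²) + q·N(c,σ²) and Q = N(0,σ²) be measures on ℝ. Then Ψ_α(Q‖P) ≤ Ψ_α(P‖Q), where Ψ_α(P‖Q) = ∫ p(x)^α q(x)^{1−α} dx with p, q the densities. -/

import Mathlib

open Real Set MeasureTheory

/-- Gaussian density on ℝ with mean `μ` and variance `σ²`. -/
noncomputable def gaussDens (μ σ : ℝ) (x : ℝ) : ℝ :=
  (σ * Real.sqrt (2 * Real.pi))⁻¹ * Real.exp (-(x - μ) ^ 2 / (2 * σ ^ 2))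


lemma phi_convex {α : ℝ} (hα : 1 < α) :
    ConvexOn ℝ (Set.Ici 1) (fun x : ℝ => x ^ α - x ^ (1 - α)) := by
  apply convexOn_of_hasDerivWithinAt2_nonneg (convex_Ici 1)
    (f' := fun x => α * x ^ (α - 1) - (1 - α) * x ^ (1 - α - 1))
    (f'' := fun x => α * (α - 1) * x ^ (α - 1 - 1) - (1 - α) * (1 - α - 1) * x ^ (1 - α - 1 - 1))
  · apply ContinuousOn.sub
    · exact ContinuousOn.rpow_const continuousOn_id (fun x hx => Or.inl (by
        have : (1:ℝ) ≤ x := hx; positivity))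
    · exact ContinuousOn.rpow_const continuousOn_id (fun x hx => Or.inl (by
        have : (1:ℝ) ≤ x := hx; positivity))
  · intro x hx
    rw [interior_Ici] at hx
    have hx1 : (1:ℝ) < x := hx
    have hxne : x ≠ 0 := by positivity
    exact ((hasDerivAt_rpow_const (Or.inl hxne)).sub
      (hasDerivAt_rpow_const (p := 1 - α) (Or.inl hxne))).hasDerivWithinAt
  · intro x hx
    rw [interior_Ici] at hx
    have hx1 : (1:ℝ) < x := hx
    have hxne : x ≠ 0 := by positivity
    have := (((hasDerivAt_rpow_const (p := α - 1) (Or.inl hxne)).const_mul α).sub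
      ((hasDerivAt_rpow_const (p := 1 - α - 1) (Or.inl hxne)).const_mul (1 - α))).hasDerivWithinAt
      (s := interior (Set.Ici (1:ℝ)))
    exact this.congr_deriv (by ring)
  · intro x hx
    rw [interior_Ici] at hx
    have hx1 : (1:ℝ) < x := hx
    have h1 : x ^ (1 - α - 1 - 1) ≤ x ^ (α - 1 - 1) :=
      rpow_le_rpow_of_exponent_le hx1.le (by linarith)
    have h2 : 0 < x ^ (1 - α - 1 - 1) := rpow_pos_of_pos (by linarith) _
    have h3 : 0 ≤ α * (α - 1) := by nlinarith
    nlinarith [mul_le_mul_of_nonneg_left h1 h3]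

lemma phi_slope {α : ℝ} (hα : 1 < α) {w u : ℝ} (hw : 1 ≤ w) (hwu : w ≤ u) :
    (w ^ α - w ^ (1 - α)) * (u - 1) ≤ (u ^ α - u ^ (1 - α)) * (w - 1) := by
  rcases eq_or_lt_of_le hw with rfl | hw1
  · simp
  rcases eq_or_lt_of_le hwu with rfl | hwu1
  · ring_nf; exact le_refl _
  have key := (phi_convex hα).slope_mono_adjacent (x := 1) (y := w) (z := u)
    (by simp) (by simp; linarith) hw1 hwu1
  simp only [Real.one_rpow, sub_self, sub_zero] at key
  rw [div_le_div_iff₀ (by linarith) (by linarith)] at key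
  nlinarith [key]

lemma core_ineq {α : ℝ} (hα : 1 < α) {t q : ℝ} (ht : 1 ≤ t) (hq0 : 0 ≤ q) (hq1 : q ≤ 1) :
    (1 - q + q * t) ^ (1 - α) + t ^ α * ((1 - q) * t + q) ^ (1 - α)
      ≤ (1 - q + q * t) ^ α + t ^ (1 - α) * ((1 - q) * t + q) ^ α := by
  set u : ℝ := 1 - q + q * t with hu
  set v : ℝ := (1 - q) * t + q with hv
  have hu1 : 1 ≤ u := by nlinarith
  have hv1 : 1 ≤ v := by nlinarith
  have hv0 : 0 < v := by linarith
  have hvt : v ≤ t := by nlinarith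
  set w : ℝ := t / v with hw
  have hw1 : 1 ≤ w := (one_le_div hv0).2 hvt
  have htvw : t = v * w := by rw [hw]; field_simp
  have hwu : w ≤ u := by nlinarith [mul_le_mul_of_nonneg_left hw1 (show (0:ℝ) ≤ v - 1 by linarith)]
  -- rewrite t^α v^(1-α) = v * w^α  and t^(1-α) v^α = v * w^(1-α)
  have hw0 : 0 < w := lt_of_lt_of_le one_pos hw1
  have e1 : t ^ α * v ^ (1 - α) = v * w ^ α := by
    rw [htvw, mul_rpow hv0.le hw0.le,
      show v ^ α * w ^ α * v ^ (1 - α) = v ^ α * v ^ (1 - α) * w ^ α from by ring,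
      ← rpow_add hv0]
    norm_num
  have e2 : t ^ (1 - α) * v ^ α = v * w ^ (1 - α) := by
    rw [htvw, mul_rpow hv0.le hw0.le,
      show v ^ (1 - α) * w ^ (1 - α) * v ^ α = v ^ (1 - α) * v ^ α * w ^ (1 - α) from by ring,
      ← rpow_add hv0]
    norm_num
  rw [e1, e2]
  have key := phi_slope hα hw1 hwu
  have hveq : u - 1 = v * (w - 1) := by
    have : v * w = t := htvw.symm
    nlinarith
  rcases eq_or_lt_of_le hw1 with hw1' | hw1'
  · have hu_eq : u = 1 := by nlinarith
    rw [hu_eq, ← hw1']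
    simp
  · have hpos : 0 < w - 1 := by linarith
    rw [hveq] at key
    have : v * (w ^ α - w ^ (1 - α)) ≤ u ^ α - u ^ (1 - α) := by
      have := le_of_mul_le_mul_right (by nlinarith [key] : (v * (w ^ α - w ^ (1 - α))) * (w - 1) ≤ (u ^ α - u ^ (1 - α)) * (w - 1)) hpos
      exact this
    nlinarith

lemma pointwise_le {α : ℝ} (hα : 1 < α) {q : ℝ} (hq0 : 0 ≤ q) (hq1 : q ≤ 1)
    {a b : ℝ} (ha : 0 < a) (hb : 0 < b) (hab : a ≤ b) :
    a ^ α * ((1 - q) * a + q * b) ^ (1 - α) + b ^ α * ((1 - q) * b + q * a) ^ (1 - α)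
      ≤ ((1 - q) * a + q * b) ^ α * a ^ (1 - α) + ((1 - q) * b + q * a) ^ α * b ^ (1 - α) := by
  set t : ℝ := b / a with htdef
  have ht : 1 ≤ t := (one_le_div ha).2 hab
  have ht0 : 0 < t := lt_of_lt_of_le one_pos ht
  have hbt : b = a * t := by rw [htdef]; field_simp
  have hu0 : 0 < 1 - q + q * t := by nlinarith
  have hv0 : 0 < (1 - q) * t + q := by nlinarith
  have hP : (1 - q) * a + q * b = a * (1 - q + q * t) := by rw [hbt]; ring
  have hR : (1 - q) * b + q * a = a * ((1 - q) * t + q) := by rw [hbt]; ring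
  have haa : a ^ α * a ^ (1 - α) = a := by
    rw [← rpow_add ha]; norm_num
  have key := core_ineq hα ht hq0 hq1
  have expand : ∀ X : ℝ, 0 < X → ∀ β : ℝ, (a * X) ^ β = a ^ β * X ^ β :=
    fun X hX β => mul_rpow ha.le hX.le
  rw [hP, hR, hbt, expand _ hu0, expand _ hv0, expand _ hu0, expand _ hv0, expand _ ht0,
    expand _ ht0]
  calc a ^ α * (a ^ (1 - α) * (1 - q + q * t) ^ (1 - α))
        + a ^ α * t ^ α * (a ^ (1 - α) * ((1 - q) * t + q) ^ (1 - α))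
      = a * ((1 - q + q * t) ^ (1 - α) + t ^ α * ((1 - q) * t + q) ^ (1 - α)) := by
        rw [show a ^ α * (a ^ (1 - α) * (1 - q + q * t) ^ (1 - α)) = (a ^ α * a ^ (1 - α)) * (1 - q + q * t) ^ (1 - α) from by ring,
          show a ^ α * t ^ α * (a ^ (1 - α) * ((1 - q) * t + q) ^ (1 - α)) = (a ^ α * a ^ (1 - α)) * (t ^ α * ((1 - q) * t + q) ^ (1 - α)) from by ring, haa]
        ring
    _ ≤ a * ((1 - q + q * t) ^ α + t ^ (1 - α) * ((1 - q) * t + q) ^ α) := by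
        exact mul_le_mul_of_nonneg_left key ha.le
    _ = a ^ α * (1 - q + q * t) ^ α * a ^ (1 - α)
        + a ^ α * ((1 - q) * t + q) ^ α * (a ^ (1 - α) * t ^ (1 - α)) := by
        rw [show a ^ α * (1 - q + q * t) ^ α * a ^ (1 - α) = (a ^ α * a ^ (1 - α)) * (1 - q + q * t) ^ α from by ring,
          show a ^ α * ((1 - q) * t + q) ^ α * (a ^ (1 - α) * t ^ (1 - α)) = (a ^ α * a ^ (1 - α)) * (((1 - q) * t + q) ^ α * t ^ (1 - α)) from by ring, haa]
        ring

lemma pointwise {α : ℝ} (hα : 1 < α) {q : ℝ} (hq0 : 0 ≤ q) (hq1 : q ≤ 1)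
    {a b : ℝ} (ha : 0 < a) (hb : 0 < b) :
    a ^ α * ((1 - q) * a + q * b) ^ (1 - α) + b ^ α * ((1 - q) * b + q * a) ^ (1 - α)
      ≤ ((1 - q) * a + q * b) ^ α * a ^ (1 - α) + ((1 - q) * b + q * a) ^ α * b ^ (1 - α) := by
  rcases le_total a b with hab | hab
  · exact pointwise_le hα hq0 hq1 ha hb hab
  · have := pointwise_le hα hq0 hq1 hb ha hab
    rw [show (1 - q) * b + q * a = (1 - q) * b + q * a from rfl] at this
    linarith

lemma gaussDens_pos {μ σ : ℝ} (hσ : 0 < σ) (x : ℝ) : 0 < gaussDens μ σ x := by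
  unfold gaussDens
  have h2 : 0 < Real.sqrt (2 * Real.pi) := Real.sqrt_pos.2 (by positivity)
  positivity

lemma continuous_gaussDens (μ σ : ℝ) : Continuous (gaussDens μ σ) := by
  unfold gaussDens
  fun_prop

lemma integrable_gaussDens {μ σ : ℝ} (hσ : 0 < σ) : Integrable (gaussDens μ σ) := by
  have h : gaussDens μ σ = fun x => (σ * Real.sqrt (2 * Real.pi))⁻¹ *
      Real.exp (-(1 / (2 * σ ^ 2)) * (x - μ) ^ 2) := by
    funext x
    unfold gaussDens
    congr 1
    ring_nf
  rw [h]
  exact (((integrable_exp_neg_mul_sq (by positivity)).comp_sub_right μ).const_mul _)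

lemma integrable_gauss_cross {σ : ℝ} (hσ : 0 < σ) (μ₁ μ₂ β : ℝ) :
    Integrable (fun x => gaussDens μ₁ σ x ^ β * gaussDens μ₂ σ x ^ (1 - β)) := by
  set A : ℝ := (σ * Real.sqrt (2 * Real.pi))⁻¹ with hA
  have hA0 : 0 < A := by
    have h2 : 0 < Real.sqrt (2 * Real.pi) := Real.sqrt_pos.2 (by positivity)
    positivity
  set d : ℝ := β * μ₁ + (1 - β) * μ₂ with hd
  set C : ℝ := (β * μ₁ ^ 2 + (1 - β) * μ₂ ^ 2 - d ^ 2) / (2 * σ ^ 2) with hC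
  have h : (fun x => gaussDens μ₁ σ x ^ β * gaussDens μ₂ σ x ^ (1 - β))
      = fun x => (A * Real.exp (-C)) * Real.exp (-(1 / (2 * σ ^ 2)) * (x - d) ^ 2) := by
    funext x
    unfold gaussDens
    rw [← hA, Real.mul_rpow hA0.le (Real.exp_pos _).le,
      Real.mul_rpow hA0.le (Real.exp_pos _).le, ← Real.exp_mul, ← Real.exp_mul]
    have hAβ : A ^ β * A ^ (1 - β) = A := by
      rw [← Real.rpow_add hA0]; norm_num
    rw [show A ^ β * Real.exp (-(x - μ₁) ^ 2 / (2 * σ ^ 2) * β) *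
        (A ^ (1 - β) * Real.exp (-(x - μ₂) ^ 2 / (2 * σ ^ 2) * (1 - β)))
        = (A ^ β * A ^ (1 - β)) * (Real.exp (-(x - μ₁) ^ 2 / (2 * σ ^ 2) * β) *
          Real.exp (-(x - μ₂) ^ 2 / (2 * σ ^ 2) * (1 - β))) from by ring,
      hAβ, ← Real.exp_add, mul_assoc, ← Real.exp_add]
    congr 1
    rw [hC, hd]
    field_simp
    ring
  rw [h]
  exact (((integrable_exp_neg_mul_sq (by positivity)).comp_sub_right d).const_mul _)

lemma gaussDens_reflect₁ (σ c x : ℝ) : gaussDens 0 σ (c - x) = gaussDens c σ x := by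
  unfold gaussDens; congr 1; ring_nf

lemma gaussDens_reflect₂ (σ c x : ℝ) : gaussDens c σ (c - x) = gaussDens 0 σ x := by
  unfold gaussDens; congr 1; ring_nf

lemma integral_reflect (f : ℝ → ℝ) (c : ℝ) : ∫ x : ℝ, f (c - x) = ∫ x : ℝ, f x := by
  have h1 : ∫ x : ℝ, f (c - x) = ∫ x : ℝ, f (c - (-x)) := (integral_neg_eq_self _ _).symm
  rw [h1]
  have h2 : (fun x : ℝ => f (c - (-x))) = fun x => f (x + c) := by
    funext x; congr 1; ring
  rw [h2]
  exact integral_add_right_eq_self f c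

lemma combo_pos {q a b : ℝ} (hq0 : 0 ≤ q) (hq1 : q ≤ 1) (ha : 0 < a) (hb : 0 < b) :
    0 < (1 - q) * a + q * b := by
  rcases eq_or_lt_of_le hq0 with rfl | hq
  · simpa using ha
  · have h1 : 0 < q * b := mul_pos hq hb
    nlinarith

lemma integrable_mixA {σ : ℝ} (hσ : 0 < σ) {α : ℝ} (hα : 1 < α) {q : ℝ}
    (hq0 : 0 ≤ q) (hq1 : q ≤ 1) (μ₁ μ₂ : ℝ) :
    Integrable (fun x => gaussDens μ₁ σ x ^ α
      * ((1 - q) * gaussDens μ₁ σ x + q * gaussDens μ₂ σ x) ^ (1 - α)) := by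
  have hcontP : Continuous (fun x => (1 - q) * gaussDens μ₁ σ x + q * gaussDens μ₂ σ x) :=
    (continuous_const.mul (continuous_gaussDens μ₁ σ)).add
      (continuous_const.mul (continuous_gaussDens μ₂ σ))
  have hP0 : ∀ x, 0 < (1 - q) * gaussDens μ₁ σ x + q * gaussDens μ₂ σ x := fun x =>
    combo_pos hq0 hq1 (gaussDens_pos hσ x) (gaussDens_pos hσ x)
  have hcont : Continuous (fun x => gaussDens μ₁ σ x ^ α
      * ((1 - q) * gaussDens μ₁ σ x + q * gaussDens μ₂ σ x) ^ (1 - α)) := by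
    apply Continuous.mul
    · exact (continuous_gaussDens μ₁ σ).rpow_const (fun x => Or.inl (gaussDens_pos hσ x).ne')
    · exact hcontP.rpow_const (fun x => Or.inl (hP0 x).ne')
  apply Integrable.mono' ((integrable_gaussDens hσ).add (integrable_gauss_cross hσ μ₁ μ₂ α))
    hcont.aestronglyMeasurable
  refine Filter.Eventually.of_forall (fun x => ?_)
  set a := gaussDens μ₁ σ x with ha
  set b := gaussDens μ₂ σ x with hb
  have ha0 : 0 < a := gaussDens_pos hσ x
  have hb0 : 0 < b := gaussDens_pos hσ x
  set P := (1 - q) * a + q * b with hPdef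
  have hm : min a b ≤ P := by
    rcases min_cases a b with ⟨h, _⟩ | ⟨h, _⟩ <;> rw [h] <;> nlinarith
  have hm0 : 0 < min a b := lt_min ha0 hb0
  have h1 : P ^ (1 - α) ≤ (min a b) ^ (1 - α) :=
    antitoneOn_rpow_Ioi_of_exponent_nonpos (by linarith) hm0 (lt_of_lt_of_le hm0 hm) hm
  have h2 : (min a b) ^ (1 - α) ≤ a ^ (1 - α) + b ^ (1 - α) := by
    rcases min_cases a b with ⟨h, _⟩ | ⟨h, _⟩ <;> rw [h]
    · nlinarith [rpow_nonneg hb0.le (1 - α)]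
    · nlinarith [rpow_nonneg ha0.le (1 - α)]
  have haa : a ^ α * a ^ (1 - α) = a := by rw [← rpow_add ha0]; norm_num
  have hnn : 0 ≤ a ^ α * P ^ (1 - α) :=
    mul_nonneg (rpow_nonneg ha0.le _) (rpow_nonneg (hP0 x).le _)
  rw [Real.norm_eq_abs, abs_of_nonneg hnn]
  calc a ^ α * P ^ (1 - α) ≤ a ^ α * (a ^ (1 - α) + b ^ (1 - α)) := by
        apply mul_le_mul_of_nonneg_left (le_trans h1 h2) (rpow_nonneg ha0.le _)
    _ = a + a ^ α * b ^ (1 - α) := by rw [mul_add, haa]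

lemma integrable_mixB {σ : ℝ} (hσ : 0 < σ) {α : ℝ} (hα : 1 < α) {q : ℝ}
    (hq0 : 0 ≤ q) (hq1 : q ≤ 1) (μ₁ μ₂ : ℝ) :
    Integrable (fun x => ((1 - q) * gaussDens μ₁ σ x + q * gaussDens μ₂ σ x) ^ α
      * gaussDens μ₁ σ x ^ (1 - α)) := by
  have hcontP : Continuous (fun x => (1 - q) * gaussDens μ₁ σ x + q * gaussDens μ₂ σ x) :=
    (continuous_const.mul (continuous_gaussDens μ₁ σ)).add
      (continuous_const.mul (continuous_gaussDens μ₂ σ))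
  have hP0 : ∀ x, 0 < (1 - q) * gaussDens μ₁ σ x + q * gaussDens μ₂ σ x := fun x =>
    combo_pos hq0 hq1 (gaussDens_pos hσ x) (gaussDens_pos hσ x)
  have hcont : Continuous (fun x => ((1 - q) * gaussDens μ₁ σ x + q * gaussDens μ₂ σ x) ^ α
      * gaussDens μ₁ σ x ^ (1 - α)) := by
    apply Continuous.mul
    · exact hcontP.rpow_const (fun x => Or.inl (hP0 x).ne')
    · exact (continuous_gaussDens μ₁ σ).rpow_const (fun x => Or.inl (gaussDens_pos hσ x).ne')
  have hbig : Integrable (fun x => (2:ℝ) ^ α * (gaussDens μ₁ σ x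
      + gaussDens μ₂ σ x ^ α * gaussDens μ₁ σ x ^ (1 - α))) :=
    (((integrable_gaussDens hσ).add (integrable_gauss_cross hσ μ₂ μ₁ α)).const_mul _)
  apply Integrable.mono' hbig hcont.aestronglyMeasurable
  refine Filter.Eventually.of_forall (fun x => ?_)
  set a := gaussDens μ₁ σ x with ha
  set b := gaussDens μ₂ σ x with hb
  have ha0 : 0 < a := gaussDens_pos hσ x
  have hb0 : 0 < b := gaussDens_pos hσ x
  set P := (1 - q) * a + q * b with hPdef
  have hα0 : (0:ℝ) ≤ α := by linarith
  have hM : P ≤ 2 * max a b := by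
    rcases max_cases a b with ⟨h, _⟩ | ⟨h, _⟩ <;> rw [h] <;> nlinarith
  have h1 : P ^ α ≤ (2 * max a b) ^ α := rpow_le_rpow (hP0 x).le hM hα0
  have h2 : (2 * max a b) ^ α = 2 ^ α * (max a b) ^ α :=
    mul_rpow (by norm_num) (le_max_of_le_left ha0.le)
  have h3 : (max a b) ^ α ≤ a ^ α + b ^ α := by
    rcases max_cases a b with ⟨h, _⟩ | ⟨h, _⟩ <;> rw [h]
    · nlinarith [rpow_nonneg hb0.le α]
    · nlinarith [rpow_nonneg ha0.le α]
  have haa : a ^ α * a ^ (1 - α) = a := by rw [← rpow_add ha0]; norm_num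
  have hnn : 0 ≤ P ^ α * a ^ (1 - α) :=
    mul_nonneg (rpow_nonneg (hP0 x).le _) (rpow_nonneg ha0.le _)
  rw [Real.norm_eq_abs, abs_of_nonneg hnn]
  have ha1α : 0 ≤ a ^ (1 - α) := rpow_nonneg ha0.le _
  calc P ^ α * a ^ (1 - α) ≤ (2 ^ α * (a ^ α + b ^ α)) * a ^ (1 - α) := by
        apply mul_le_mul_of_nonneg_right _ ha1α
        calc P ^ α ≤ 2 ^ α * (a ⊔ b) ^ α := h2 ▸ h1
          _ ≤ 2 ^ α * (a ^ α + b ^ α) :=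
            mul_le_mul_of_nonneg_left h3 (rpow_nonneg (by norm_num) _)
    _ = 2 ^ α * (a + b ^ α * a ^ (1 - α)) := by
        rw [mul_assoc, add_mul, haa]

theorem mixture_gaussian_renyi_ordering (α σ c : ℝ) (hα : 1 < α) (hσ : 0 < σ)
    (q : ℝ) (hq : q ∈ Set.Icc (0:ℝ) 1) :
    (∫ x : ℝ, (gaussDens 0 σ x) ^ α
        * ((1 - q) * gaussDens 0 σ x + q * gaussDens c σ x) ^ (1 - α))
      ≤ ∫ x : ℝ, ((1 - q) * gaussDens 0 σ x + q * gaussDens c σ x) ^ α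
        * (gaussDens 0 σ x) ^ (1 - α) := by
  obtain ⟨hq0, hq1⟩ := hq
  set I1 : ℝ → ℝ := fun x => (gaussDens 0 σ x) ^ α
    * ((1 - q) * gaussDens 0 σ x + q * gaussDens c σ x) ^ (1 - α) with hI1
  set I2 : ℝ → ℝ := fun x => ((1 - q) * gaussDens 0 σ x + q * gaussDens c σ x) ^ α
    * (gaussDens 0 σ x) ^ (1 - α) with hI2
  set I3 : ℝ → ℝ := fun x => (gaussDens c σ x) ^ α
    * ((1 - q) * gaussDens c σ x + q * gaussDens 0 σ x) ^ (1 - α) with hI3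
  set I4 : ℝ → ℝ := fun x => ((1 - q) * gaussDens c σ x + q * gaussDens 0 σ x) ^ α
    * (gaussDens c σ x) ^ (1 - α) with hI4
  have int1 : Integrable I1 := integrable_mixA hσ hα hq0 hq1 0 c
  have int2 : Integrable I2 := integrable_mixB hσ hα hq0 hq1 0 c
  have int3 : Integrable I3 := integrable_mixA hσ hα hq0 hq1 c 0
  have int4 : Integrable I4 := integrable_mixB hσ hα hq0 hq1 c 0
  have href1 : (fun x => I1 (c - x)) = I3 := by
    funext x
    simp only [hI1, hI3, gaussDens_reflect₁, gaussDens_reflect₂]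
  have href2 : (fun x => I2 (c - x)) = I4 := by
    funext x
    simp only [hI2, hI4, gaussDens_reflect₁, gaussDens_reflect₂]
  have h13 : ∫ x, I3 x = ∫ x, I1 x := by rw [← href1]; exact integral_reflect I1 c
  have h24 : ∫ x, I4 x = ∫ x, I2 x := by rw [← href2]; exact integral_reflect I2 c
  have hmono : ∫ x, (I1 x + I3 x) ≤ ∫ x, (I2 x + I4 x) := by
    apply integral_mono (int1.add int3) (int2.add int4)
    intro x
    exact pointwise hα hq0 hq1 (gaussDens_pos hσ x) (gaussDens_pos hσ x)
  rw [integral_add int1 int3, integral_add int2 int4, h13, h24] at hmono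
  linarith
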